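/- Let A be a skew brace and I an ideal of A. Then [I,A]_Ab, the additive subgroup generated by { i+b-i-b, i*b, i∘b∘i'∘b' : i ∈ I, b ∈ A }, is an ideal of A. -/
import Mathlib


/-- A skew brace: a type with an additive group structure and a second group
operation `circ` (with inverse `cinv` and the same identity `0`) satisfying the
skew brace compatibility law `a ∘ (b + c) = a ∘ b - a + a ∘ c`. -/
class SkewBrace (A : Type*) extends AddGroup A where
  circ : A → A → A
  cinv : A → A
  circ_assoc : ∀ a b c : A, circ (circ a b) c = circ a (circ b c)
  zero_circ : ∀ a : A, circ 0 a = a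
  circ_zero : ∀ a : A, circ a 0 = a
  cinv_circ : ∀ a : A, circ (cinv a) a = 0
  circ_cinv : ∀ a : A, circ a (cinv a) = 0
  compat : ∀ a b c : A, circ a (b + c) = circ a b - a + circ a c

namespace SkewBrace

variable {A : Type*} [SkewBrace A]

/-- The star operation `a * b = -a + a ∘ b - b`. -/
def star (a b : A) : A := -a + circ a b - b

/-- The right distributor `[a,b,c] = (a+b)∘c - b∘c + c - a∘c`. -/
def rd (a b c : A) : A := circ (a + b) c - circ b c + c - circ a c

/-- An ideal of a skew brace: a normal additive subgroup closed under the
star operation on both sides. -/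
def IsIdeal (I : AddSubgroup A) : Prop :=
  (∀ a : A, ∀ x ∈ I, a + x - a ∈ I) ∧
  (∀ a : A, ∀ x ∈ I, star a x ∈ I) ∧
  (∀ a : A, ∀ x ∈ I, star x a ∈ I)

/-- `Z_R(A)`: additively central elements annihilating all right distributors. -/
def ZR (A : Type*) [SkewBrace A] : Set A :=
  {z | (∀ a : A, z + a = a + z) ∧ ∀ b c : A, rd z b c = 0 ∧ rd b z c = 0 ∧ rd b c z = 0}

end SkewBrace


namespace SkewBrace

variable {A : Type*} [SkewBrace A]

lemma circ_eq' (x y : A) : circ x y = x + star x y + y := by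
  simp [star, sub_eq_add_neg, add_assoc]

lemma cinv_circ_cancel (a x : A) : circ (cinv a) (circ a x) = x := by
  rw [← circ_assoc, cinv_circ, zero_circ]

section Aux
variable {I : AddSubgroup A} (hI : IsIdeal I)

include hI

lemma cinv_mem {i : A} (hi : i ∈ I) : cinv i ∈ I := by
  have h : i + star i (cinv i) + cinv i = 0 := by rw [← circ_eq', circ_cinv]
  have h2 : cinv i = -(i + star i (cinv i)) := eq_neg_of_add_eq_zero_right h
  rw [h2]
  exact I.neg_mem (I.add_mem hi (hI.2.2 _ _ hi))

lemma circ_mem {i j : A} (hi : i ∈ I) (hj : j ∈ I) : circ i j ∈ I := by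
  rw [circ_eq']
  exact I.add_mem (I.add_mem hi (hI.2.2 _ _ hi)) hj

lemma circ_conj_mem {i : A} (hi : i ∈ I) (b : A) : circ b (circ i (cinv b)) ∈ I := by
  have hk : i + star i (cinv b) ∈ I := I.add_mem hi (hI.2.2 _ _ hi)
  have h2 : circ b (circ i (cinv b))
      = b + (star b (i + star i (cinv b)) + (i + star i (cinv b))) - b := by
    rw [circ_eq' i (cinv b), compat, circ_cinv, circ_eq']
    simp [sub_eq_add_neg, add_assoc]
  rw [h2]
  exact hI.1 b _ (I.add_mem (hI.2.1 _ _ hk) hk)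

lemma ccomm_mem {i : A} (hi : i ∈ I) (b : A) :
    circ (circ (circ i b) (cinv i)) (cinv b) ∈ I := by
  rw [circ_assoc, circ_assoc]
  exact circ_mem hI hi (circ_conj_mem hI (cinv_mem hI hi) b)

end Aux

end SkewBrace

open SkewBrace

theorem stmt11 {A : Type*} [SkewBrace A] (I : AddSubgroup A) (hI : IsIdeal I) :
    IsIdeal (AddSubgroup.closure
      {x : A | ∃ i ∈ I, ∃ b : A,
        x = i + b - i - b ∨ x = star i b ∨
        x = SkewBrace.circ (SkewBrace.circ (SkewBrace.circ i b) (SkewBrace.cinv i))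
              (SkewBrace.cinv b)}) := by
  set S : Set A := {x : A | ∃ i ∈ I, ∃ b : A,
        x = i + b - i - b ∨ x = star i b ∨
        x = SkewBrace.circ (SkewBrace.circ (SkewBrace.circ i b) (SkewBrace.cinv i))
              (SkewBrace.cinv b)} with hS
  set J : AddSubgroup A := AddSubgroup.closure S with hJ
  -- Every generator lies in I, hence J ≤ I.
  have hJI : J ≤ I := by
    rw [hJ, AddSubgroup.closure_le]
    rintro x ⟨i, hi, b, h | h | h⟩
    · subst h
      have : i + b - i - b = i + (b + -i - b) := by
        simp [sub_eq_add_neg, add_assoc]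
      rw [this]
      have := hI.1 b (-i) (I.neg_mem hi)
      exact I.add_mem hi (by simpa [sub_eq_add_neg] using this)
    · subst h; exact hI.2.2 b i hi
    · subst h; exact ccomm_mem hI hi b
  have hgen1 : ∀ i ∈ I, ∀ b : A, i + b - i - b ∈ J :=
    fun i hi b => AddSubgroup.subset_closure ⟨i, hi, b, Or.inl rfl⟩
  have hgen2 : ∀ i ∈ I, ∀ b : A, star i b ∈ J :=
    fun i hi b => AddSubgroup.subset_closure ⟨i, hi, b, Or.inr (Or.inl rfl)⟩
  have hgen3 : ∀ i ∈ I, ∀ b : A,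
      SkewBrace.circ (SkewBrace.circ (SkewBrace.circ i b) (SkewBrace.cinv i))
        (SkewBrace.cinv b) ∈ J :=
    fun i hi b => AddSubgroup.subset_closure ⟨i, hi, b, Or.inr (Or.inr rfl)⟩
  -- J is normal in (A,+).
  have hconj : ∀ a : A, ∀ x ∈ J, a + x - a ∈ J := by
    intro a x hx
    have h1 : x + a - x - a ∈ J := hgen1 x (hJI hx) a
    have h2 : a + x - a = -(x + a - x - a) + x := by
      simp [sub_eq_add_neg, neg_add_rev, add_assoc]
    rw [h2]
    exact J.add_mem (J.neg_mem h1) hx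
  have hconj' : ∀ a : A, ∀ x ∈ J, a + x + -a ∈ J := by
    intro a x hx
    have := hconj a x hx
    rwa [sub_eq_add_neg] at this
  have hconjn : ∀ b : A, ∀ x ∈ J, -b + x + b ∈ J := by
    intro b x hx
    have := hconj' (-b) x hx
    rwa [neg_neg] at this
  -- Key: star b i ∈ J for any b : A and i ∈ I.
  have hBR : ∀ b : A, ∀ i ∈ I, star b i ∈ J := by
    intro b i hi
    set c : A := SkewBrace.circ (SkewBrace.circ (SkewBrace.circ i b) (SkewBrace.cinv i))
      (SkewBrace.cinv b) with hcdef
    have hcI : c ∈ I := ccomm_mem hI hi b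
    have hcJ : c ∈ J := hgen3 i hi b
    have huJ : star c (circ b i) ∈ J := hgen2 c hcI (circ b i)
    have hvJ : star i b ∈ J := hgen2 i hi b
    have hc : circ c (circ b i) = circ i b := by
      rw [hcdef, circ_assoc, cinv_circ_cancel, circ_assoc, cinv_circ, circ_zero]
    have h2 : i + star i b + b = c + star c (circ b i) + (b + star b i + i) := by
      conv_rhs => rw [show b + star b i + i = circ b i from (circ_eq' b i).symm,
        ← circ_eq' c (circ b i)]
      rw [hc, circ_eq']
    have h3 : star b i = -b + (-(star c (circ b i)) + (-c + (i + star i b + b))) + -i := by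
      rw [h2]
      simp [add_assoc]
    have h4 : star b i =
        (-b + -(star c (circ b i)) + b) + ((-b + -c + b) +
          ((-b + (i + star i b + -i) + b) + (-b + (i + b + -i + -b) + b))) := by
      rw [h3]
      simp [add_assoc]
    rw [h4]
    have hm1 : -b + -(star c (circ b i)) + b ∈ J := hconjn b _ (J.neg_mem huJ)
    have hm2 : -b + -c + b ∈ J := hconjn b _ (J.neg_mem hcJ)
    have hm3 : -b + (i + star i b + -i) + b ∈ J :=
      hconjn b _ (hconj' i _ hvJ)
    have hm4 : -b + (i + b + -i + -b) + b ∈ J := by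
      refine hconjn b _ ?_
      have := hgen1 i hi b
      simpa [sub_eq_add_neg] using this
    exact J.add_mem hm1 (J.add_mem hm2 (J.add_mem hm3 hm4))
  exact ⟨hconj, fun a x hx => hBR a x (hJI hx),
    fun a x hx => hgen2 x (hJI hx) a⟩
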